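/- Let p_n(x) be the characteristic polynomial of the n×n affine Cartan matrix of type A_{n-1}^{(1)}. Then p_n(x) = ∑_{j=1}^{n} (-1)^{n+j} * 2n * (n+j-1)! / ((n-j)! * (2j)!) * x^j. -/

import Mathlib

open Polynomial Matrix Finset

noncomputable section AffineCartanAux

/-- The coefficient in the expansion. -/
def dd (n j : ℕ) : ℝ :=
  2 * n * Nat.factorial (n + j - 1) / (Nat.factorial (n - j) * Nat.factorial (2 * j))

/-- The explicit polynomial sum. -/
def SS (x : ℝ) (n : ℕ) : ℝ := ∑ j ∈ Finset.range (n + 1), (-1 : ℝ) ^ j * dd n j * x ^ j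

/-- The Chebyshev-type recurrence. -/
def gg (x : ℝ) : ℕ → ℝ
  | 0 => 2
  | 1 => 2 - x
  | (k+2) => (2 - x) * gg x (k+1) - gg x k

lemma dd_zero (k : ℕ) : dd (k + 1) 0 = 2 := by
  unfold dd
  rw [show k + 1 + 0 - 1 = k by omega, show k + 1 - 0 = k + 1 by omega]
  rw [Nat.factorial_succ]
  have h0 : (Nat.factorial k : ℝ) ≠ 0 := by positivity
  push_cast
  field_simp
  ring

lemma dd_self (k : ℕ) : dd (k + 1) (k + 1) = 1 := by
  unfold dd
  rw [show k + 1 + (k + 1) - 1 = 2 * k + 1 by omega, show k + 1 - (k + 1) = 0 by omega,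
    show 2 * (k + 1) = (2 * k + 1) + 1 by omega]
  rw [show Nat.factorial ((2 * k + 1) + 1) = (2 * k + 2) * Nat.factorial (2 * k + 1) from
    Nat.factorial_succ _]
  rw [Nat.factorial_zero]
  push_cast
  rw [div_eq_one_iff_eq (by positivity)]
  ring

lemma dd_top (k : ℕ) : dd (k + 2) (k + 1) = 2 * dd (k + 1) (k + 1) + dd (k + 1) k := by
  have h1 : dd (k + 2) (k + 1) = 2 * (k + 2) := by
    unfold dd
    rw [show k + 2 + (k + 1) - 1 = 2 * (k + 1) by omega, show k + 2 - (k + 1) = 1 by omega]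
    have h0 : (Nat.factorial (2 * (k + 1)) : ℝ) ≠ 0 := by positivity
    push_cast [Nat.factorial_one]
    field_simp
  have h2 : dd (k + 1) k = 2 * (k + 1) := by
    unfold dd
    rw [show k + 1 + k - 1 = 2 * k by omega, show k + 1 - k = 1 by omega]
    have h0 : (Nat.factorial (2 * k) : ℝ) ≠ 0 := by positivity
    push_cast [Nat.factorial_one]
    field_simp
  rw [h1, h2, dd_self]
  push_cast; ring

lemma dd_interior' (m i : ℕ) :
    dd (m + i + 3) (i + 1) + dd (m + i + 1) (i + 1)
      = 2 * dd (m + i + 2) (i + 1) + dd (m + i + 2) i := by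
  unfold dd
  rw [show m + i + 3 + (i + 1) - 1 = (m + 2 * i + 1) + 1 + 1 by omega,
    show m + i + 3 - (i + 1) = m + 1 + 1 by omega,
    show m + i + 1 + (i + 1) - 1 = m + 2 * i + 1 by omega,
    show m + i + 1 - (i + 1) = m by omega,
    show m + i + 2 + (i + 1) - 1 = (m + 2 * i + 1) + 1 by omega,
    show m + i + 2 - (i + 1) = m + 1 by omega,
    show m + i + 2 + i - 1 = m + 2 * i + 1 by omega,
    show m + i + 2 - i = m + 1 + 1 by omega,
    show 2 * (i + 1) = 2 * i + 1 + 1 by omega]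
  have hA : (Nat.factorial (m + 2 * i + 1) : ℝ) ≠ 0 := by positivity
  have hm : (Nat.factorial m : ℝ) ≠ 0 := by positivity
  have h2i : (Nat.factorial (2 * i) : ℝ) ≠ 0 := by positivity
  simp only [Nat.factorial_succ]
  push_cast
  field_simp
  ring

lemma dd_interior (k j : ℕ) (h1 : 1 ≤ j) (h2 : j ≤ k) :
    dd (k + 2) j = 2 * dd (k + 1) j + dd (k + 1) (j - 1) - dd k j := by
  obtain ⟨i, rfl⟩ : ∃ i, j = i + 1 := ⟨j - 1, by omega⟩
  obtain ⟨m, rfl⟩ : ∃ m, k = m + i + 1 := ⟨k - i - 1, by omega⟩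
  have := dd_interior' m i
  simp only [show i + 1 - 1 = i from rfl]
  rw [show m + i + 1 + 2 = m + i + 3 by ring, show m + i + 1 + 1 = m + i + 2 by ring] at *
  linarith


lemma SS_rec (x : ℝ) (k : ℕ) (hk : 1 ≤ k) :
    SS x (k + 2) = (2 - x) * SS x (k + 1) - SS x k := by
  obtain ⟨m, hm⟩ : ∃ m, k = m + 1 := ⟨k - 1, by omega⟩
  have key : ∑ j ∈ Finset.range k, (-1:ℝ) ^ (j+1) * dd (k+2) (j+1) * x ^ (j+1)
      = 2 * (∑ j ∈ Finset.range k, (-1:ℝ) ^ (j+1) * dd (k+1) (j+1) * x ^ (j+1))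
        - x * (∑ j ∈ Finset.range k, (-1:ℝ) ^ j * dd (k+1) j * x ^ j)
        - ∑ j ∈ Finset.range k, (-1:ℝ) ^ (j+1) * dd k (j+1) * x ^ (j+1) := by
    rw [Finset.mul_sum, Finset.mul_sum, ← Finset.sum_sub_distrib, ← Finset.sum_sub_distrib]
    refine Finset.sum_congr rfl fun j hj => ?_
    rw [Finset.mem_range] at hj
    rw [dd_interior k (j+1) (by omega) (by omega)]
    simp only [Nat.add_sub_cancel]
    ring
  have e2 : SS x (k + 2) = (∑ j ∈ Finset.range k, (-1:ℝ) ^ (j+1) * dd (k+2) (j+1) * x ^ (j+1))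
      + (-1:ℝ) ^ 0 * dd (k+2) 0 * x ^ 0
      + (-1:ℝ) ^ (k+1) * dd (k+2) (k+1) * x ^ (k+1)
      + (-1:ℝ) ^ (k+2) * dd (k+2) (k+2) * x ^ (k+2) := by
    unfold SS
    rw [Finset.sum_range_succ, Finset.sum_range_succ, Finset.sum_range_succ']
  have e1 : SS x (k + 1) = (-1:ℝ) ^ 0 * dd (k+1) 0 * x ^ 0
      + (∑ j ∈ Finset.range k, (-1:ℝ) ^ (j+1) * dd (k+1) (j+1) * x ^ (j+1))
      + (-1:ℝ) ^ (k+1) * dd (k+1) (k+1) * x ^ (k+1) := by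
    unfold SS
    rw [Finset.sum_range_succ, Finset.sum_range_succ']
    ring
  have e1' : SS x (k + 1) = (∑ j ∈ Finset.range k, (-1:ℝ) ^ j * dd (k+1) j * x ^ j)
      + (-1:ℝ) ^ k * dd (k+1) k * x ^ k
      + (-1:ℝ) ^ (k+1) * dd (k+1) (k+1) * x ^ (k+1) := by
    unfold SS
    rw [Finset.sum_range_succ, Finset.sum_range_succ]
  have e0 : SS x k = (-1:ℝ) ^ 0 * dd k 0 * x ^ 0
      + ∑ j ∈ Finset.range k, (-1:ℝ) ^ (j+1) * dd k (j+1) * x ^ (j+1) := by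
    unfold SS
    rw [Finset.sum_range_succ']
    ring
  have expand : (2 - x) * SS x (k+1) = 2 * SS x (k+1) - x * SS x (k+1) := by ring
  rw [expand]
  nth_rewrite 1 [e1]
  nth_rewrite 1 [e1']
  rw [e2, e0, key, dd_top k, dd_self k, dd_self (k+1),
    show k + 2 = (k+1) + 1 from rfl, dd_zero (k+1), dd_zero k, hm, dd_zero m]
  ring


lemma gg_eq_SS (x : ℝ) (n : ℕ) (hn : 1 ≤ n) : gg x n = SS x n := by
  have h1 : gg x 1 = SS x 1 := by
    show (2 - x) = _
    unfold SS
    rw [show (1:ℕ) + 1 = 2 from rfl, Finset.sum_range_succ, Finset.sum_range_one,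
      (dd_zero 0 : dd 1 0 = 2), (dd_self 0 : dd 1 1 = 1)]
    ring
  have h2 : gg x 2 = SS x 2 := by
    show (2 - x) * gg x 1 - gg x 0 = _
    show (2 - x) * (2 - x) - 2 = _
    unfold SS
    rw [show (2:ℕ) + 1 = 3 from rfl, Finset.sum_range_succ, Finset.sum_range_succ,
      Finset.sum_range_one, show (2:ℕ) = 1 + 1 from rfl, dd_zero 1, dd_self 1]
    have hd21 : dd (1+1) 1 = 4 := by
      unfold dd
      norm_num [Nat.factorial]
    rw [hd21]
    ring
  -- two-step induction
  obtain ⟨m, rfl⟩ : ∃ m, n = m + 1 := ⟨n - 1, by omega⟩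
  clear hn
  induction m using Nat.strong_induction_on with
  | _ m ih =>
    match m with
    | 0 => exact h1
    | 1 => exact h2
    | (j+2) =>
      show gg x (j + 1 + 2) = _
      rw [show gg x (j+1+2) = (2 - x) * gg x (j+1+1) - gg x (j+1) from rfl]
      rw [ih (j+1) (by omega), ih j (by omega)]
      rw [show j + 2 + 1 = (j + 1) + 2 by ring, SS_rec x (j+1) (by omega)]


lemma eval_charpoly_det {n : ℕ} (A : Matrix (Fin n) (Fin n) ℂ) (c : ℂ) :
    (A.charpoly).eval c = Matrix.det (Matrix.of fun i j => (if i = j then c else 0) - A i j) := by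
  show Polynomial.eval c A.charpoly = _
  rw [← Polynomial.coe_evalRingHom, Matrix.charpoly, RingHom.map_det]
  congr 1
  ext i j
  by_cases h : i = j
  · subst h
    simp [Matrix.charmatrix_apply_eq]
  · simp [Matrix.charmatrix_apply_ne _ _ _ h, h]


variable (n : ℕ)

def Mat : Matrix (Fin n) (Fin n) ℝ :=
  Matrix.of fun i j : Fin n =>
    if i = j then (2 : ℝ)
    else if i.val + 1 = j.val ∨ j.val + 1 = i.val ∨
      (i.val = 0 ∧ j.val = n - 1) ∨ (i.val = n - 1 ∧ j.val = 0) then -1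
    else 0

def fsucc (hn : 3 ≤ n) (i : Fin n) : Fin n :=
  if h : (i : ℕ) + 1 < n then ⟨(i : ℕ) + 1, h⟩ else ⟨0, by omega⟩

def fpred (hn : 3 ≤ n) (i : Fin n) : Fin n :=
  if _ : (i : ℕ) = 0 then ⟨n - 1, by omega⟩ else ⟨(i : ℕ) - 1, by omega⟩

lemma entry_eq (hn : 3 ≤ n) (x : ℝ) (i j : Fin n) :
    (if i = j then (x : ℂ) else 0) - ((Mat n).map Complex.ofRealHom) i j
      = (if j = i then ((x : ℂ) - 2) else 0) + (if j = fsucc n hn i then 1 else 0)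
        + (if j = fpred n hn i then 1 else 0) := by
  have hiv := i.isLt
  have hjv := j.isLt
  have hs : (j = fsucc n hn i) ↔ ((i : ℕ) + 1 = (j : ℕ) ∨ ((i : ℕ) = n - 1 ∧ (j : ℕ) = 0)) := by
    unfold fsucc
    split_ifs with h <;> simp only [Fin.ext_iff, Fin.val_mk] <;> omega
  have hp : (j = fpred n hn i) ↔ ((j : ℕ) + 1 = (i : ℕ) ∨ ((i : ℕ) = 0 ∧ (j : ℕ) = n - 1)) := by
    unfold fpred
    split_ifs with h <;> simp only [Fin.ext_iff, Fin.val_mk] <;> omega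
  simp only [Mat, Matrix.map_apply, Matrix.of_apply, hs, hp, Fin.ext_iff]
  split_ifs <;> first
    | omega
    | (simp only [Complex.ofRealHom_eq_coe]; push_cast; ring)


variable {n}

lemma zpow_fsucc (hn : 3 ≤ n) {z : ℂ} (hz : z ^ n = 1) (i : Fin n) :
    z ^ ((fsucc n hn i : Fin n) : ℕ) = z ^ (i : ℕ) * z := by
  unfold fsucc
  split_ifs with h
  · simp [pow_succ]
  · have h1 : (i : ℕ) = n - 1 := by have := i.isLt; omega
    simp only [Fin.val_mk, pow_zero, h1]
    rw [← pow_succ, show n - 1 + 1 = n by omega, hz]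

lemma zpow_fpred (hn : 3 ≤ n) {z : ℂ} (hz : z ^ n = 1) (i : Fin n) :
    z ^ ((fpred n hn i : Fin n) : ℕ) * z = z ^ (i : ℕ) := by
  unfold fpred
  split_ifs with h
  · simp only [Fin.val_mk, h, pow_zero]
    rw [← pow_succ, show n - 1 + 1 = n by omega, hz]
  · simp only [Fin.val_mk]
    rw [← pow_succ, show (i : ℕ) - 1 + 1 = (i : ℕ) by omega]

def Fmat (z : ℂ) : Matrix (Fin n) (Fin n) ℂ :=
  Matrix.of fun i k : Fin n => z ^ ((i : ℕ) * (k : ℕ))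

lemma Fmat_eq_vandermonde (z : ℂ) :
    (Fmat z : Matrix (Fin n) (Fin n) ℂ) = Matrix.vandermonde (fun i : Fin n => z ^ (i : ℕ)) := by
  ext i k
  simp [Fmat, Matrix.vandermonde, ← pow_mul]

lemma NF_eq (hn : 3 ≤ n) (x : ℝ) {z : ℂ} (hz : z ^ n = 1) (hz0 : z ≠ 0) :
    (Matrix.of fun i j => (if i = j then (x:ℂ) else 0) - ((Mat n).map Complex.ofRealHom) i j)
        * Fmat z
      = Fmat z * Matrix.diagonal
          (fun k : Fin n => ((x : ℂ) - 2) + z ^ (k : ℕ) + (z ^ (k : ℕ))⁻¹) := by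
  ext i k
  rw [Matrix.mul_diagonal, Matrix.mul_apply]
  simp only [Matrix.of_apply, entry_eq n hn x i]
  simp only [Fmat, Matrix.of_apply, add_mul, ite_mul, zero_mul, one_mul,
    Finset.sum_add_distrib, Finset.sum_ite_eq' Finset.univ, Finset.mem_univ, if_true]
  have hzk : z ^ (k : ℕ) ≠ 0 := pow_ne_zero _ hz0
  have e1 : z ^ (((fsucc n hn i : Fin n) : ℕ) * (k : ℕ))
      = z ^ ((i : ℕ) * (k : ℕ)) * z ^ (k : ℕ) := by
    rw [pow_mul, pow_mul, zpow_fsucc hn hz, mul_pow]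
  have e2 : z ^ (((fpred n hn i : Fin n) : ℕ) * (k : ℕ)) * z ^ (k : ℕ)
      = z ^ ((i : ℕ) * (k : ℕ)) := by
    rw [pow_mul, pow_mul, ← mul_pow, zpow_fpred hn hz]
  rw [e1]
  field_simp
  linear_combination e2

lemma detN_eq_prod (hn : 3 ≤ n) (x : ℝ) {z : ℂ} (hprim : IsPrimitiveRoot z n) :
    Matrix.det (Matrix.of fun i j =>
        (if i = j then (x:ℂ) else 0) - ((Mat n).map Complex.ofRealHom) i j)
      = ∏ k : Fin n, (((x : ℂ) - 2) + z ^ (k : ℕ) + (z ^ (k : ℕ))⁻¹) := by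
  have hz : z ^ n = 1 := hprim.pow_eq_one
  have hz0 : z ≠ 0 := by
    intro h
    rw [h, zero_pow (by omega : n ≠ 0)] at hz
    exact zero_ne_one hz
  have hF : Matrix.det (Fmat z : Matrix (Fin n) (Fin n) ℂ) ≠ 0 := by
    rw [Fmat_eq_vandermonde]
    rw [Matrix.det_vandermonde_ne_zero_iff]
    intro i j hij
    exact Fin.ext (hprim.pow_inj i.isLt j.isLt hij)
  have h := congrArg Matrix.det (NF_eq hn x hz hz0)
  rw [Matrix.det_mul, Matrix.det_mul, Matrix.det_diagonal, mul_comm] at h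
  exact mul_left_cancel₀ hF h


lemma prod_eval (hn : 3 ≤ n) (x : ℝ) {z : ℂ} (hprim : IsPrimitiveRoot z n) :
    ∏ k : Fin n, (((x : ℂ) - 2) + z ^ (k : ℕ) + (z ^ (k : ℕ))⁻¹)
      = (-1 : ℂ) ^ (n - 1) * (2 - ((gg x n : ℝ) : ℂ)) := by
  have hz : z ^ n = 1 := hprim.pow_eq_one
  have hz0 : z ≠ 0 := by
    intro h
    rw [h, zero_pow (by omega : n ≠ 0)] at hz
    exact zero_ne_one hz
  obtain ⟨r, hr⟩ := IsAlgClosed.exists_pow_nat_eq (((2 : ℂ) - x) ^ 2 - 4) (by norm_num : 0 < 2)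
  set α : ℂ := ((2 - (x : ℂ)) + r) / 2 with hα
  set β : ℂ := ((2 - (x : ℂ)) - r) / 2 with hβ
  have hsum : α + β = 2 - (x : ℂ) := by rw [hα, hβ]; ring
  have hab : α * β = 1 := by rw [hα, hβ]; linear_combination -hr / 4
  have hα2 : α ^ 2 = (2 - (x : ℂ)) * α - 1 := by rw [hα]; linear_combination hr / 4
  have hβ2 : β ^ 2 = (2 - (x : ℂ)) * β - 1 := by rw [hβ]; linear_combination hr / 4
  have hgg : ∀ k, ((gg x k : ℝ) : ℂ) = α ^ k + β ^ k := by
    intro k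
    induction k using Nat.strong_induction_on with
    | _ k ih =>
      match k with
      | 0 => norm_num [gg]
      | 1 =>
        show ((2 - x : ℝ) : ℂ) = _
        simpa using hsum.symm
      | (j+2) =>
        show (((2 - x) * gg x (j+1) - gg x j : ℝ) : ℂ) = _
        push_cast
        rw [ih (j+1) (by omega), ih j (by omega)]
        linear_combination (-(α ^ j)) * hα2 - β ^ j * hβ2
  have hP : ∀ c : ℂ, c ^ n - 1 = ∏ k ∈ Finset.range n, (c - z ^ k) := by
    intro c
    have h1 := X_pow_sub_C_eq_prod hprim (by omega : 0 < n) (one_pow n)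
    have h2 := congrArg (Polynomial.eval c) h1
    simpa [Polynomial.eval_prod] using h2
  have negprod : ∀ w : ℂ, ∏ k ∈ Finset.range n, (z ^ k - w)
      = (-1 : ℂ) ^ n * ∏ k ∈ Finset.range n, (w - z ^ k) := by
    intro w
    have he : ∀ k : ℕ, z ^ k - w = (-1) * (w - z ^ k) := fun k => by ring
    simp_rw [he]
    rw [Finset.prod_mul_distrib, Finset.prod_const, Finset.card_range]
  have hPz : (∏ k ∈ Finset.range n, z ^ k) = (-1 : ℂ) ^ (n + 1) := by
    have h := hP 0
    rw [zero_pow (by omega : n ≠ 0)] at h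
    have he : ∀ k ∈ Finset.range n, (0 : ℂ) - z ^ k = (-1) * z ^ k := fun k _ => by ring
    rw [Finset.prod_congr rfl he, Finset.prod_mul_distrib, Finset.prod_const,
      Finset.card_range] at h
    have hsq : ((-1 : ℂ)) ^ n * ((-1 : ℂ)) ^ n = 1 := by rw [← mul_pow]; norm_num
    linear_combination (-(-1 : ℂ) ^ n) * h - (∏ k ∈ Finset.range n, z ^ k) * hsq
  rw [Fin.prod_univ_eq_prod_range (fun k => ((x : ℂ) - 2) + z ^ k + (z ^ k)⁻¹) n]
  have hfac : ∀ k ∈ Finset.range n, ((x : ℂ) - 2) + z ^ k + (z ^ k)⁻¹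
      = (z ^ k)⁻¹ * ((z ^ k - α) * (z ^ k - β)) := by
    intro k _
    have hzk : z ^ k ≠ 0 := pow_ne_zero _ hz0
    field_simp
    linear_combination (z ^ k) * hsum - hab
  rw [Finset.prod_congr rfl hfac, Finset.prod_mul_distrib, Finset.prod_mul_distrib,
    Finset.prod_inv_distrib, negprod α, negprod β, ← hP α, ← hP β, hPz, hgg n]
  have habn : α ^ n * β ^ n = 1 := by rw [← mul_pow, hab, one_pow]
  have hinv : ((-1 : ℂ) ^ (n + 1))⁻¹ = (-1 : ℂ) ^ (n + 1) := by rw [← inv_pow]; norm_num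
  have hnn : (-1 : ℂ) ^ (n + 1) = (-1 : ℂ) ^ (n - 1) := by
    rw [show n + 1 = n - 1 + 2 by omega, pow_add]
    norm_num
  rw [hinv, hnn]
  have hsq : ((-1 : ℂ)) ^ n * ((-1 : ℂ)) ^ n = 1 := by rw [← mul_pow]; norm_num
  linear_combination ((-1 : ℂ) ^ (n - 1) * (α ^ n - 1) * (β ^ n - 1)) * hsq
    + (-1 : ℂ) ^ (n - 1) * habn



lemma charpoly_eval_eq (hn : 3 ≤ n) (x : ℝ) :
    Polynomial.eval x (Mat n).charpoly = (-1 : ℝ) ^ (n - 1) * (2 - gg x n) := by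
  have hprim := Complex.isPrimitiveRoot_exp n (by omega : n ≠ 0)
  apply Complex.ofReal_injective
  have h1 : ((Polynomial.eval x (Mat n).charpoly : ℝ) : ℂ)
      = (-1 : ℂ) ^ (n - 1) * (2 - ((gg x n : ℝ) : ℂ)) := by
    rw [← Complex.ofRealHom_eq_coe, ← Polynomial.eval₂_at_apply Complex.ofRealHom x,
      ← Polynomial.eval_map, ← Matrix.charpoly_map, eval_charpoly_det]
    simp only [Complex.ofRealHom_eq_coe]
    rw [detN_eq_prod hn x hprim, prod_eval hn x hprim]
  rw [h1]
  push_cast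
  ring

lemma rhs_eq (hn : 3 ≤ n) (x : ℝ) :
    ∑ j ∈ Finset.Icc 1 n,
      (-1 : ℝ) ^ (n + j) * (2 * n * Nat.factorial (n + j - 1)) /
        (Nat.factorial (n - j) * Nat.factorial (2 * j)) * x ^ j
      = (-1 : ℝ) ^ (n - 1) * (2 - SS x n) := by
  obtain ⟨m, hm⟩ : ∃ m, n = m + 1 := ⟨n - 1, by omega⟩
  rw [← Finset.Ico_add_one_right_eq_Icc, Finset.sum_Ico_eq_sum_range]
  simp only [Nat.succ_sub_one, Nat.add_sub_cancel]
  unfold SS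
  rw [Finset.sum_range_succ', hm, dd_zero m, ← hm]
  have hterm : ∀ j ∈ Finset.range n,
      (-1 : ℝ) ^ (n + (1 + j)) * (2 * n * Nat.factorial (n + (1 + j) - 1)) /
          (Nat.factorial (n - (1 + j)) * Nat.factorial (2 * (1 + j))) * x ^ (1 + j)
        = -((-1 : ℝ) ^ (n - 1) * ((-1 : ℝ) ^ (j + 1) * dd n (j + 1) * x ^ (j + 1))) := by
    intro j hj
    unfold dd
    rw [show n + (1 + j) - 1 = n + (j + 1) - 1 by omega,
      show n - (1 + j) = n - (j + 1) by omega,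
      show 2 * (1 + j) = 2 * (j + 1) by omega,
      show x ^ (1 + j) = x ^ (j + 1) by rw [Nat.add_comm],
      show n + (1 + j) = n - 1 + (j + 1) + 1 by omega,
      pow_add, pow_add]
    ring
  rw [Finset.sum_congr rfl hterm, Finset.sum_neg_distrib, ← Finset.mul_sum]
  ring

end AffineCartanAux

open Polynomial Matrix Finset

theorem charpoly_affine_cartan_A (n : ℕ) (hn : 3 ≤ n) (x : ℝ) :
    ((Matrix.of fun i j : Fin n =>
      if i = j then (2 : ℝ)
      else if i.val + 1 = j.val ∨ j.val + 1 = i.val ∨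
        (i.val = 0 ∧ j.val = n - 1) ∨ (i.val = n - 1 ∧ j.val = 0) then -1
      else 0).charpoly).eval x =
    ∑ j ∈ Finset.Icc 1 n,
      (-1 : ℝ) ^ (n + j) * (2 * n * Nat.factorial (n + j - 1)) /
        (Nat.factorial (n - j) * Nat.factorial (2 * j)) * x ^ j := by
  have h1 : ((Matrix.of fun i j : Fin n =>
      if i = j then (2 : ℝ)
      else if i.val + 1 = j.val ∨ j.val + 1 = i.val ∨
        (i.val = 0 ∧ j.val = n - 1) ∨ (i.val = n - 1 ∧ j.val = 0) then -1
      else 0)) = Mat n := rfl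
  rw [h1, charpoly_eval_eq hn x, rhs_eq hn x, gg_eq_SS x n (by omega)]
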